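/- Weak duality: for every y ≥ 0, every z ≥ 0, every nonnegative F-measurable random variable V, and every nonnegative F-measurable random variable ξ satisfying E[ξ·min(V,H)] ≤ z, it holds that E[U(V(·),·)] ≤ E[Ũ(y·ξ(·),·)] + z·y. -/

import Mathlib

open MeasureTheory Set Filter
open scoped ENNReal NNReal Topology

/-- The convex dual `Ũ(y) := sup_{0 ≤ z ≤ H} (U(z) − y·z)` (for a fixed state). -/
noncomputable def dualU (U : ℝ → ℝ) (H y : ℝ) : ℝ :=
  sSup ((fun z => U z - y * z) '' Set.Icc 0 H)

/-- `min(I(y), H)`, where `I(y) := inf{ z ∈ (0,H) : U'(z) < y }` with the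
conventions `inf ∅ = +∞` and `I(0) = +∞` (so that the minimum with `H`
equals `H` in those cases). -/
noncomputable def IminU (U : ℝ → ℝ) (H y : ℝ) : ℝ :=
  sInf ({z | z ∈ Set.Ioo 0 H ∧ deriv U z < y} ∪ {H})

lemma exists_rat_seq_tendsto (x : ℝ) :
    ∃ u : ℕ → ℚ, Tendsto (fun n => (u n : ℝ)) atTop (𝓝 x) := by
  have hx : x ∈ closure (Set.range ((↑) : ℚ → ℝ)) := by
    rw [Rat.denseRange_cast.closure_eq]; trivial
  obtain ⟨u, hu, hlim⟩ := mem_closure_iff_seq_limit.mp hx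
  choose q hq using hu
  exact ⟨q, by simpa only [hq] using hlim⟩

lemma csSup_image_Icc_eq_ciSup (F : ℝ → ℝ) (hF : Continuous F) {a b : ℝ} (hab : a ≤ b) :
    sSup (F '' Set.Icc a b) = ⨆ q : ℚ, F (min (max (q : ℝ) a) b) := by
  have hproj : ∀ q : ℚ, min (max (q : ℝ) a) b ∈ Set.Icc a b := fun q =>
    ⟨le_min (le_max_right _ _) hab, min_le_right _ _⟩
  have hbdd : BddAbove (F '' Set.Icc a b) := ((isCompact_Icc).image hF).bddAbove
  have hsub : Set.range (fun q : ℚ => F (min (max (q : ℝ) a) b)) ⊆ F '' Set.Icc a b := by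
    rintro _ ⟨q, rfl⟩; exact ⟨_, hproj q, rfl⟩
  have hbdd2 : BddAbove (Set.range fun q : ℚ => F (min (max (q : ℝ) a) b)) := hbdd.mono hsub
  refine le_antisymm (csSup_le ((Set.nonempty_Icc.mpr hab).image F) ?_)
    (ciSup_le fun q => le_csSup hbdd (hsub ⟨q, rfl⟩))
  rintro _ ⟨x, hx, rfl⟩
  obtain ⟨u, hu⟩ := exists_rat_seq_tendsto x
  have h1 : Tendsto (fun n => F (min (max ((u n : ℝ)) a) b)) atTop (𝓝 (F (min (max x a) b))) :=
    (hF.tendsto _).comp ((hu.max tendsto_const_nhds).min tendsto_const_nhds)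
  have hx' : min (max x a) b = x := by rw [max_eq_left hx.1, min_eq_left hx.2]
  rw [hx'] at h1
  exact le_of_tendsto h1 (Eventually.of_forall fun n => le_ciSup hbdd2 (u n))

/-- Weak duality: for every `y ≥ 0`, `z ≥ 0`, every nonnegative measurable
`V`, and every nonnegative measurable `ξ` with `E[ξ·min(V,H)] ≤ z`, one has
`E[U(V(·),·)] ≤ E[Ũ(y·ξ(·),·)] + z·y`. -/
theorem stmt10 {Ω : Type*} [MeasurableSpace Ω] (μ : Measure Ω) [IsProbabilityMeasure μ]
    (H : Ω → ℝ) (hHmeas : Measurable H) (hHpos : ∀ ω, 0 < H ω)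
    (U : Ω → ℝ → ℝ)
    (hU0 : ∀ ω, ∀ z, 0 ≤ z → 0 ≤ U ω z)
    (hUmono : ∀ ω, MonotoneOn (U ω) (Set.Ici 0))
    (hUcont : ∀ ω, ContinuousOn (U ω) (Set.Ici 0))
    (hUconc : ∀ ω, StrictConcaveOn ℝ (Set.Ioo 0 (H ω)) (U ω))
    (hUdiff : ∀ ω, ∀ z ∈ Set.Ioo 0 (H ω), DifferentiableAt ℝ (U ω) z)
    (hUcap : ∀ ω, ∀ w, 0 ≤ w → U ω w = U ω (min w (H ω)))
    (hUmeas : ∀ z, Measurable fun ω => U ω z)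
    (hUint : Integrable (fun ω => U ω (H ω)) μ)
    (y z : ℝ) (hy : 0 ≤ y) (hz : 0 ≤ z)
    (V : Ω → ℝ) (hVmeas : Measurable V) (hVpos : ∀ ω, 0 ≤ V ω)
    (ξ : Ω → ℝ) (hξmeas : Measurable ξ) (hξpos : ∀ ω, 0 ≤ ξ ω)
    (hbudget : (∫⁻ ω, ENNReal.ofReal (ξ ω * min (V ω) (H ω)) ∂μ) ≤
      ENNReal.ofReal z) :
    (∫ ω, U ω (V ω) ∂μ) ≤ (∫ ω, dualU (U ω) (H ω) (y * ξ ω) ∂μ) + z * y := by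
  classical
  set Ub : Ω → ℝ → ℝ := fun ω t => U ω (max t 0) with hUb
  have hUbcont : ∀ ω, Continuous (Ub ω) := fun ω =>
    (hUcont ω).comp_continuous (continuous_id.max continuous_const) fun x => Set.mem_Ici.mpr (le_max_right _ _)
  have hjoint : Measurable (Function.uncurry fun t (ω : Ω) => Ub ω t) :=
    measurable_uncurry_of_continuous_of_measurable (fun ω => hUbcont ω) (fun t => hUmeas _)
  have hcomp : ∀ (W : Ω → ℝ), Measurable W → Measurable fun ω => Ub ω (W ω) := fun W hW =>
    hjoint.comp (hW.prodMk measurable_id)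
  set c : Ω → ℝ := fun ω => y * ξ ω with hc
  have hcpos : ∀ ω, 0 ≤ c ω := fun ω => mul_nonneg hy (hξpos ω)
  set m : Ω → ℝ := fun ω => min (V ω) (H ω) with hmdef
  have hm : ∀ ω, m ω ∈ Set.Icc 0 (H ω) := fun ω =>
    ⟨le_min (hVpos ω) (hHpos ω).le, min_le_right _ _⟩
  set d : Ω → ℝ := fun ω => dualU (U ω) (H ω) (c ω) with hd
  -- replace U by Ub inside the sSup
  have himg : ∀ ω, (fun z => U ω z - c ω * z) '' Set.Icc 0 (H ω)
      = (fun z => Ub ω z - c ω * z) '' Set.Icc 0 (H ω) := by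
    intro ω
    apply Set.image_congr
    intro zz hzz
    simp [hUb, max_eq_left hzz.1]
  have hbdd : ∀ ω, BddAbove ((fun z => U ω z - c ω * z) '' Set.Icc 0 (H ω)) := by
    intro ω
    rw [himg ω]
    exact ((isCompact_Icc).image ((hUbcont ω).sub (continuous_const.mul continuous_id))).bddAbove
  have hdual_eq : ∀ ω, d ω =
      ⨆ q : ℚ, (Ub ω (min (max (q : ℝ) 0) (H ω)) - c ω * min (max (q : ℝ) 0) (H ω)) := by
    intro ω
    show dualU (U ω) (H ω) (c ω) = _
    rw [dualU, himg ω]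
    exact csSup_image_Icc_eq_ciSup _ ((hUbcont ω).sub (continuous_const.mul continuous_id))
      (hHpos ω).le
  have hdmeas : Measurable d := by
    rw [show d = fun ω => ⨆ q : ℚ,
        (Ub ω (min (max (q : ℝ) 0) (H ω)) - c ω * min (max (q : ℝ) 0) (H ω)) from
      funext hdual_eq]
    exact Measurable.iSup fun q =>
      (hcomp _ (measurable_const.min hHmeas)).sub
        ((measurable_const.mul hξmeas).mul (measurable_const.min hHmeas))
  have hd0 : ∀ ω, 0 ≤ d ω := by
    intro ω
    have h0 : U ω 0 - c ω * 0 ∈ (fun z => U ω z - c ω * z) '' Set.Icc 0 (H ω) :=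
      ⟨0, ⟨le_rfl, (hHpos ω).le⟩, rfl⟩
    have := le_csSup (hbdd ω) h0
    have h1 : 0 ≤ U ω 0 := hU0 ω 0 le_rfl
    simp only [mul_zero, sub_zero] at this
    exact h1.trans this
  have hdle : ∀ ω, d ω ≤ U ω (H ω) := by
    intro ω
    refine csSup_le ⟨_, ⟨0, ⟨le_rfl, (hHpos ω).le⟩, rfl⟩⟩ ?_
    rintro _ ⟨zz, hzz, rfl⟩
    show U ω zz - c ω * zz ≤ U ω (H ω)
    have h1 : U ω zz ≤ U ω (H ω) := hUmono ω hzz.1 ((hHpos ω).le) hzz.2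
    nlinarith [mul_nonneg (hcpos ω) hzz.1]
  have hkey : ∀ ω, U ω (V ω) ≤ d ω + c ω * m ω := by
    intro ω
    have h1 : U ω (V ω) = U ω (m ω) := hUcap ω (V ω) (hVpos ω)
    have h2 : U ω (m ω) - c ω * m ω ≤ d ω := le_csSup (hbdd ω) ⟨m ω, hm ω, rfl⟩
    linarith
  have hUVmeas : Measurable fun ω => U ω (V ω) := by
    have := hcomp V hVmeas
    convert this using 2 with ω
    simp [hUb, max_eq_left (hVpos ω)]
  have hUVle : ∀ ω, U ω (V ω) ≤ U ω (H ω) := by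
    intro ω
    rw [hUcap ω (V ω) (hVpos ω)]
    exact hUmono ω (hm ω).1 (hHpos ω).le (hm ω).2
  have hUVint : Integrable (fun ω => U ω (V ω)) μ := by
    refine hUint.mono' hUVmeas.aestronglyMeasurable (Eventually.of_forall fun ω => ?_)
    rw [Real.norm_eq_abs, abs_of_nonneg (hU0 ω (V ω) (hVpos ω))]
    exact hUVle ω
  have hdint : Integrable d μ := by
    refine hUint.mono' hdmeas.aestronglyMeasurable (Eventually.of_forall fun ω => ?_)
    rw [Real.norm_eq_abs, abs_of_nonneg (hd0 ω)]
    exact hdle ω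
  set g : Ω → ℝ := fun ω => ξ ω * m ω with hg
  have hgmeas : Measurable g := hξmeas.mul (hVmeas.min hHmeas)
  have hgpos : ∀ ω, 0 ≤ g ω := fun ω => mul_nonneg (hξpos ω) (hm ω).1
  have hgint : Integrable g μ := by
    refine ⟨hgmeas.aestronglyMeasurable, ?_⟩
    rw [hasFiniteIntegral_iff_ofReal (Eventually.of_forall hgpos)]
    exact lt_of_le_of_lt hbudget ENNReal.ofReal_lt_top
  have hgle : ∫ ω, g ω ∂μ ≤ z := by
    rw [integral_eq_lintegral_of_nonneg_ae (Eventually.of_forall hgpos)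
      hgmeas.aestronglyMeasurable]
    exact ENNReal.toReal_le_of_le_ofReal hz hbudget
  have hmono : ∫ ω, U ω (V ω) ∂μ ≤ ∫ ω, (d ω + y * g ω) ∂μ := by
    refine integral_mono hUVint (hdint.add (hgint.const_mul y)) fun ω => ?_
    have := hkey ω
    have hcm : c ω * m ω = y * g ω := by simp [hc, hg]; ring
    linarith
  rw [integral_add hdint (hgint.const_mul y), integral_const_mul] at hmono
  have : y * ∫ ω, g ω ∂μ ≤ z * y := by
    rw [mul_comm z y]
    exact mul_le_mul_of_nonneg_left hgle hy
  have hfin : ∫ ω, d ω ∂μ = ∫ ω, dualU (U ω) (H ω) (y * ξ ω) ∂μ := rfl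
  linarith
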